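/- Let R be a (not necessarily commutative) ring and (A_k)_{k≥1} a sequence in R. Define B_0 = 1 and, for n ≥ 1, B_n = Σ_{q=1}^{n} (−1)^q Σ_{(k_1,…,k_q)} A_{k_1} A_{k_2} ⋯ A_{k_q}, where the inner sum runs over all compositions (k_1,…,k_q) of n into q positive parts (k_1+⋯+k_q = n, each k_j ≥ 1), the product taken in the indicated order. Then for every n ≥ 1 one has B_n + Σ_{k=1}^{n} A_k B_{n−k} = 0 and B_n + Σ_{k=1}^{n} B_{n−k} A_k = 0; that is, the sequence (B_n) gives the two-sided coefficientwise inverse of the series 1 + Σ_{k≥1} A_k λ^k. -/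

import Mathlib

open Finset PowerSeries

section Aux

variable {R : Type*} [Ring R]

/-- Sum over antidiagonal tuples of length `q+1` splits as a double sum. -/
lemma aux_sum_adT_succ {M : Type*} [AddCommMonoid M] (q n : ℕ) (f : (Fin (q + 1) → ℕ) → M) :
    ∑ k ∈ Finset.Nat.antidiagonalTuple (q + 1) n, f k =
      ∑ ij ∈ Finset.HasAntidiagonal.antidiagonal n, ∑ k ∈ Finset.Nat.antidiagonalTuple q ij.2,
        f (Fin.cons ij.1 k) := by
  rw [Finset.sum_sigma']
  refine Finset.sum_nbij'
    (fun k => (⟨(k 0, ∑ j : Fin q, k j.succ), fun j : Fin q => k j.succ⟩ : (_ : ℕ × ℕ) × (Fin q → ℕ)))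
    (fun p => Fin.cons p.1.1 p.2) ?_ ?_ ?_ ?_ ?_
  · intro k hk
    rw [Finset.Nat.mem_antidiagonalTuple] at hk
    rw [Finset.mem_sigma, Finset.HasAntidiagonal.mem_antidiagonal, Finset.Nat.mem_antidiagonalTuple]
    exact ⟨by rw [← hk, Fin.sum_univ_succ], rfl⟩
  · rintro ⟨⟨i, j⟩, k⟩ hmem
    rw [Finset.mem_sigma, Finset.HasAntidiagonal.mem_antidiagonal, Finset.Nat.mem_antidiagonalTuple] at hmem
    rw [Finset.Nat.mem_antidiagonalTuple, Fin.sum_univ_succ]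
    simp only [Fin.cons_zero, Fin.cons_succ]
    rw [hmem.2, hmem.1]
  · intro k _
    exact Fin.cons_self_tail k
  · rintro ⟨⟨i, j⟩, k⟩ hmem
    rw [Finset.mem_sigma, Finset.HasAntidiagonal.mem_antidiagonal, Finset.Nat.mem_antidiagonalTuple] at hmem
    refine Sigma.ext ?_ (heq_of_eq ?_)
    · simp only [Fin.cons_zero, Fin.cons_succ]
      rw [hmem.2]
    · funext j'
      simp [Fin.cons_succ]
  · intro k _
    exact (congrArg f (Fin.cons_self_tail k)).symm

/-- The auxiliary power series `Σ_{k≥1} A_k X^k`. -/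
noncomputable def auxA (A : ℕ → R) : R⟦X⟧ :=
  PowerSeries.mk fun n => if n = 0 then 0 else A n

lemma coeff_auxA (A : ℕ → R) (m : ℕ) :
    coeff m (auxA A) = if m = 0 then 0 else A m :=
  coeff_mk _ _

/-- Coefficients of powers of `auxA` as sums over antidiagonal tuples. -/
lemma coeff_auxA_pow (A : ℕ → R) :
    ∀ q n, coeff n (auxA A ^ q) =
      ∑ k ∈ Finset.Nat.antidiagonalTuple q n,
        (List.ofFn fun j => if k j = 0 then 0 else A (k j)).prod := by
  intro q
  induction q with
  | zero =>
    intro n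
    cases n with
    | zero => simp
    | succ m => simp [PowerSeries.coeff_one]
  | succ q ih =>
    intro n
    rw [pow_succ', PowerSeries.coeff_mul, aux_sum_adT_succ]
    refine Finset.sum_congr rfl ?_
    rintro ⟨i, j⟩ _
    rw [ih j, Finset.mul_sum, coeff_auxA]
    refine Finset.sum_congr rfl ?_
    intro k _
    rw [List.ofFn_succ, List.prod_cons]
    simp [Fin.cons_zero, Fin.cons_succ]

/-- Powers of `auxA` have vanishing low-order coefficients. -/
lemma coeff_auxA_pow_eq_zero (A : ℕ → R) {q n : ℕ} (h : n < q) :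
    coeff n (auxA A ^ q) = 0 := by
  rw [coeff_auxA_pow]
  refine Finset.sum_eq_zero ?_
  intro k hk
  rw [Finset.Nat.mem_antidiagonalTuple] at hk
  have hex : ∃ j, k j = 0 := by
    by_contra hc
    push_neg at hc
    have : q ≤ ∑ j, k j := by
      calc q = ∑ _j : Fin q, 1 := by simp
        _ ≤ ∑ j, k j := Finset.sum_le_sum fun j _ => Nat.one_le_iff_ne_zero.mpr (hc j)
    omega
  obtain ⟨j, hj⟩ := hex
  refine List.prod_eq_zero ?_
  rw [List.mem_ofFn]
  exact ⟨j, by simp [hj]⟩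

/-- The coefficient of `auxA ^ q` equals the composition sum from the statement. -/
lemma coeff_auxA_pow_eq_S (A : ℕ → R) (q n : ℕ) :
    coeff n (auxA A ^ q) =
      ∑ k ∈ Finset.univ.filter
          (fun k : Fin q → Fin (n + 1) =>
            (∀ j, 1 ≤ (k j : ℕ)) ∧ ∑ j, (k j : ℕ) = n),
        (List.ofFn (fun j => A ((k j : ℕ)))).prod := by
  rw [coeff_auxA_pow]
  rw [← Finset.sum_filter_of_ne (p := fun k : Fin q → ℕ => ∀ j, k j ≠ 0)
    (by
      intro k _ hne j
      intro hj0
      apply hne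
      refine List.prod_eq_zero ?_
      rw [List.mem_ofFn]
      exact ⟨j, by simp [hj0]⟩)]
  refine Finset.sum_bij' (i := fun k hk => fun j => (⟨min (k j) n, Nat.lt_succ_of_le (Nat.min_le_right _ _)⟩ : Fin (n + 1)))
    (j := fun k _ => fun j => (k j : ℕ)) ?_ ?_ ?_ ?_ ?_
  · intro k hk
    rw [Finset.mem_filter, Finset.Nat.mem_antidiagonalTuple] at hk
    rw [Finset.mem_filter]
    have hle : ∀ j, k j ≤ n := by
      intro j
      rw [← hk.1]
      exact Finset.single_le_sum (fun i _ => Nat.zero_le _) (Finset.mem_univ j)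
    refine ⟨Finset.mem_univ _, ?_, ?_⟩
    · intro j
      have := hk.2 j
      simp only [min_eq_left (hle j)]
      omega
    · simp only [min_eq_left (hle _)]
      exact hk.1
  · intro k hk
    rw [Finset.mem_filter] at hk
    rw [Finset.mem_filter, Finset.Nat.mem_antidiagonalTuple]
    refine ⟨hk.2.2, ?_⟩
    intro j
    exact Nat.one_le_iff_ne_zero.mp (hk.2.1 j)
  · intro k hk
    rw [Finset.mem_filter, Finset.Nat.mem_antidiagonalTuple] at hk
    have hle : ∀ j, k j ≤ n := by
      intro j
      rw [← hk.1]
      exact Finset.single_le_sum (fun i _ => Nat.zero_le _) (Finset.mem_univ j)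
    funext j
    simp [min_eq_left (hle j)]
  · intro k hk
    funext j
    have : (k j : ℕ) ≤ n := Nat.lt_succ_iff.mp (k j).isLt
    exact Fin.ext (by simp [min_eq_left this])
  · intro k hk
    rw [Finset.mem_filter, Finset.Nat.mem_antidiagonalTuple] at hk
    have hle : ∀ j, k j ≤ n := by
      intro j
      rw [← hk.1]
      exact Finset.single_le_sum (fun i _ => Nat.zero_le _) (Finset.mem_univ j)
    refine congrArg List.prod (congrArg List.ofFn (funext fun j => ?_))
    have h0 := hk.2 j
    simp [min_eq_left (hle j), h0]

end Aux

/-- The coefficientwise (two-sided) inverse of the formal series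
`1 + Σ_{k≥1} A_k λ^k` in a (not necessarily commutative) ring is given by
`B_0 = 1`, `B_n = Σ_{q=1}^n (-1)^q Σ_{compositions (k_1,…,k_q) of n} A_{k_1}⋯A_{k_q}`. -/
theorem stmt0 (R : Type*) [Ring R] (A : ℕ → R) (B : ℕ → R)
    (hB0 : B 0 = 1)
    (hBn : ∀ n, 1 ≤ n → B n =
      ∑ q ∈ Finset.Icc 1 n, (-1 : R) ^ q *
        ∑ k ∈ Finset.univ.filter
            (fun k : Fin q → Fin (n + 1) =>
              (∀ j, 1 ≤ (k j : ℕ)) ∧ ∑ j, (k j : ℕ) = n),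
          (List.ofFn (fun j => A ((k j : ℕ)))).prod) :
    ∀ n, 1 ≤ n →
      B n + ∑ k ∈ Finset.Icc 1 n, A k * B (n - k) = 0 ∧
      B n + ∑ k ∈ Finset.Icc 1 n, B (n - k) * A k = 0 := by
  intro n hn
  set a : R⟦X⟧ := auxA A with ha
  -- coefficient of (-a)^q
  have hcoeff_neg : ∀ (q m : ℕ), coeff m ((-a) ^ q) = (-1 : R) ^ q * coeff m (a ^ q) := by
    intro q m
    rw [neg_pow]
    have h1 : (-1 : R⟦X⟧) = PowerSeries.C (-1 : R) := by
      rw [map_neg, map_one]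
    rw [h1, ← map_pow, PowerSeries.coeff_C_mul]
  set P : R⟦X⟧ := ∑ q ∈ Finset.range (n + 1), (-a) ^ q with hPdef
  -- coefficients of P give B
  have hP : ∀ m, m ≤ n → coeff m P = B m := by
    intro m hm
    rw [hPdef, map_sum]
    rcases Nat.eq_zero_or_pos m with rfl | hm1
    · rw [Finset.sum_eq_single 0]
      · simp [hB0]
      · intro q _ hq0
        rw [hcoeff_neg, coeff_auxA_pow_eq_zero A (by omega), mul_zero]
      · simp
    · rw [hBn m hm1]
      have hsub : Finset.Icc 1 m ⊆ Finset.range (n + 1) := by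
        intro x hx
        simp only [Finset.mem_Icc] at hx
        exact Finset.mem_range.mpr (by omega)
      have hvan : ∀ q ∈ Finset.range (n + 1), q ∉ Finset.Icc 1 m →
          coeff m ((-a) ^ q) = 0 := by
        intro q hq hq'
        simp only [Finset.mem_range] at hq
        simp only [Finset.mem_Icc, not_and, not_le] at hq'
        rcases Nat.eq_zero_or_pos q with rfl | hq1
        · rw [pow_zero, PowerSeries.coeff_one, if_neg (by omega)]
        · have : m < q := hq' hq1
          rw [hcoeff_neg, coeff_auxA_pow_eq_zero A this, mul_zero]
      rw [← Finset.sum_subset hsub hvan]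
      refine Finset.sum_congr rfl ?_
      intro q hq
      rw [hcoeff_neg, coeff_auxA_pow_eq_S]
  have hone : (1 : R⟦X⟧) + a = -((-a) - 1) := by rw [neg_sub, sub_neg_eq_add, add_comm]
  have htail : coeff n ((1 : R⟦X⟧) - (-a) ^ (n + 1)) = 0 := by
    rw [map_sub, hcoeff_neg, coeff_auxA_pow_eq_zero A (Nat.lt_succ_self n),
      PowerSeries.coeff_one]
    rw [if_neg (by omega)]
    simp
  have hsplit : Finset.range (n + 1) = insert 0 (Finset.Icc 1 n) := by
    ext x; simp; omega
  have h0notin : (0 : ℕ) ∉ Finset.Icc 1 n := by simp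
  have hcoeff_one_add : ∀ i : ℕ, coeff i (1 + a) = if i = 0 then 1 else A i := by
    intro i
    rw [map_add, PowerSeries.coeff_one, ha, coeff_auxA]
    by_cases h : i = 0 <;> simp [h]
  constructor
  · -- left identity
    have hmul : ((1 : R⟦X⟧) + a) * P = 1 - (-a) ^ (n + 1) := by
      rw [hone, hPdef, neg_mul, mul_geom_sum, neg_sub]
    have := congrArg (coeff n) hmul
    rw [htail, PowerSeries.coeff_mul, Finset.Nat.sum_antidiagonal_eq_sum_range_succ_mk,
      hsplit, Finset.sum_insert h0notin] at this
    rw [hcoeff_one_add 0, if_pos rfl, one_mul, Nat.sub_zero, hP n le_rfl] at this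
    rw [← this]
    congr 1
    refine Finset.sum_congr rfl ?_
    intro i hi
    rw [Finset.mem_Icc] at hi
    rw [hcoeff_one_add i, if_neg (by omega), hP (n - i) (by omega)]
  · -- right identity
    have hmul : P * ((1 : R⟦X⟧) + a) = 1 - (-a) ^ (n + 1) := by
      rw [hone, hPdef, mul_neg, geom_sum_mul, neg_sub]
    have := congrArg (coeff n) hmul
    rw [htail, PowerSeries.coeff_mul, ← Finset.HasAntidiagonal.map_swap_antidiagonal, Finset.sum_map] at this
    simp only [Function.Embedding.coeFn_mk, Prod.fst_swap, Prod.snd_swap] at this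
    rw [Finset.Nat.sum_antidiagonal_eq_sum_range_succ_mk,
      hsplit, Finset.sum_insert h0notin] at this
    rw [hcoeff_one_add 0, if_pos rfl, Nat.sub_zero, hP n le_rfl, mul_one] at this
    rw [← this]
    congr 1
    refine Finset.sum_congr rfl ?_
    intro i hi
    rw [Finset.mem_Icc] at hi
    rw [hcoeff_one_add i, if_neg (by omega), hP (n - i) (by omega)]
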